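/- arXiv:1603.05645 — 2 statements merged into one kernel-verified Lean document; each statement's English description precedes it below -/
import Mathlib

section
/- Let G be a cyclic group of order r and let λ: {0,…,r−1} × (ℤ/rℤ) → ℂ× be a family of nonzero constants (indices λ^i_{k,ℓ} nonzero exactly when k ≡ ℓ + i mod r) satisfying the cocycle compatibility λ^i_{ℓ+i,ℓ} λ^j_{ℓ+i+j,ℓ+i} = λ^{i+j}_{ℓ+i+j,ℓ} for all i, j, ℓ (indices mod r, with λ^0 = 1 when the exponent reduces to 0). Fix a primitive r-th root of unity ζ. Then for each 1 ≤ j ≤ r the vector of ratios f_j = (1, ζ^j/λ^1_{2,1}, …, ζ^{j(r−1)}/λ^{r−1}_{r,1}) satisfies ζ^{ij} · (ζ^{(k−1)j}/λ^{k−1}_{k,1}) = (ζ^{(i+k−1)j}/λ^{i+k−1}_{i+k,1}) · λ^i_{i+k,k} for all i, k, and the r vectors f_1, …, f_r ∈ ℂ^r are linearly independent. -/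
/-- The combinatorial core of decomposing an induced module: nonzero structure constants
`λ^i_{k,ℓ}` (nonzero exactly when `k = ℓ + i`) satisfying an associativity cocycle
condition produce, for each `1 ≤ j ≤ r`, vectors of ratios satisfying the compatibility
identity, and these `r` vectors are linearly independent. -/
theorem simple_current_cocycle_eigenvectors
    (r : ℕ) (hr : 0 < r)
    (lam : ZMod r → ZMod r → ZMod r → ℂ) (ζ : ℂ) (hζ : IsPrimitiveRoot ζ r)
    (hne : ∀ i k l : ZMod r, lam i k l ≠ 0 ↔ k = l + i)
    (hone : ∀ l : ZMod r, lam 0 l l = 1)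
    (hcoc : ∀ i j l : ZMod r,
      lam i (l + i) l * lam j (l + i + j) (l + i) = lam (i + j) (l + i + j) l) :
    (∀ (i c : ZMod r) (j : ℕ),
      ζ ^ (i.val * j) * (ζ ^ (c.val * j) / lam c (c + 1) 1) =
        (ζ ^ ((i + c).val * j) / lam (i + c) (i + c + 1) 1) * lam i (i + c + 1) (c + 1)) ∧
    LinearIndependent ℂ
      (fun j : Fin r => fun c : ZMod r => ζ ^ (c.val * (j.val + 1)) / lam c (c + 1) 1) := by
  haveI : NeZero r := ⟨hr.ne'⟩
  have hζr : ζ ^ r = 1 := hζ.pow_eq_one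
  have hmod : ∀ a : ℕ, ζ ^ a = ζ ^ (a % r) := by
    intro a
    conv_lhs => rw [← Nat.mod_add_div a r]
    rw [pow_add, pow_mul, hζr, one_pow, mul_one]
  have hL : ∀ c : ZMod r, lam c (c + 1) 1 ≠ 0 := by
    intro c
    rw [hne]
    exact add_comm c 1
  constructor
  · intro i c j
    have hcc : lam c (c + 1) 1 * lam i (i + c + 1) (c + 1) = lam (i + c) (i + c + 1) 1 := by
      have := hcoc c i 1
      rw [add_comm (1 : ZMod r) c] at this
      rw [show c + 1 + i = i + c + 1 by ring, show c + i = i + c by ring] at this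
      exact this
    have hLi : lam i (i + c + 1) (c + 1) ≠ 0 := by
      rw [hne]; ring
    have hpow : ζ ^ ((i + c).val * j) = ζ ^ (i.val * j) * ζ ^ (c.val * j) := by
      rw [← pow_add, ← add_mul, hmod ((i + c).val * j), hmod ((i.val + c.val) * j),
        ZMod.val_add, Nat.mod_mul_mod]
    rw [hpow]
    field_simp [hL, hLi]
    rw [← hcc]
    ring
  · rw [Fintype.linearIndependent_iff]
    intro g hg j
    classical
    set p : Polynomial ℂ := ∑ j : Fin r, Polynomial.C (g j) * Polynomial.X ^ (j.val + 1) with hp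
    have hpz : p = 0 := by
      apply Polynomial.eq_zero_of_natDegree_lt_card_of_eval_eq_zero p
        (f := fun o : Option (ZMod r) => o.elim 0 (fun c => ζ ^ c.val))
      · rintro (_ | a) (_ | b) hab
        · rfl
        · exact absurd hab.symm (pow_ne_zero _ (hζ.ne_zero hr.ne'))
        · exact absurd hab (pow_ne_zero _ (hζ.ne_zero hr.ne'))
        · simp only [Option.elim] at hab
          exact congrArg _ (ZMod.val_injective r (hζ.pow_inj (ZMod.val_lt a) (ZMod.val_lt b) hab))
      · rintro (_ | c)
        · simp [hp, Polynomial.eval_finset_sum]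
        · have hc := congrFun hg c
          have hLc := hL c
          simp only [Finset.sum_apply, Pi.smul_apply, smul_eq_mul, Pi.zero_apply] at hc
          have hc' : ∑ j : Fin r, g j * ζ ^ (c.val * (j.val + 1)) = 0 := by
            have h2 := congrArg (· * lam c (c + 1) 1) hc
            simp only [Finset.sum_mul, zero_mul] at h2
            rw [← h2]
            refine Finset.sum_congr rfl fun j _ => ?_
            rw [mul_assoc, div_mul_cancel₀ _ hLc]
          simp only [Option.elim, hp, Polynomial.eval_finset_sum, Polynomial.eval_mul,
            Polynomial.eval_C, Polynomial.eval_pow, Polynomial.eval_X, ← pow_mul]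
          rw [← hc']
      · refine lt_of_le_of_lt (Polynomial.natDegree_sum_le _ _) ?_
        simp only [Fintype.card_option, ZMod.card]
        refine Nat.lt_succ_of_le ((Finset.fold_max_le r).mpr ⟨Nat.zero_le r, fun j _ => ?_⟩)
        exact le_trans (Polynomial.natDegree_C_mul_le _ _)
          (by simp only [Function.comp, Polynomial.natDegree_X_pow]; omega)
    have : g j = p.coeff (j.val + 1) := by
      rw [hp, Polynomial.finset_sum_coeff]
      rw [Finset.sum_eq_single j]
      · simp
      · intro b _ hbj
        rw [Polynomial.coeff_C_mul, Polynomial.coeff_X_pow, if_neg, mul_zero]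
        simpa using fun h => hbj (Fin.ext h.symm)
      · simp
    rw [this, hpz, Polynomial.coeff_zero]
end

section
/- Let (c_{α,k}) be a doubly indexed family of complex numbers, indexed by α in a finite union of cosets of ℤ in ℚ bounded below and k ∈ {0,…,K}, and consider the formal logarithmic series f(z) = Σ_{α,k} c_{α,k} z^{−α−1} (log z)^k. If f(z) = 0 as a function for all z in some nonempty open subset of ℂ (with a fixed branch of log), then all coefficients c_{α,k} vanish. -/
open Complex Filter Topology

private lemma rat_mul_den (q : ℚ) : q * (q.den : ℚ) = (q.num : ℚ) := by
  have h := Rat.num_div_den q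
  field_simp at h ⊢
  linarith

set_option maxHeartbeats 1000000 in
/-- Uniqueness of coefficients for convergent logarithmic series: if the exponents of
`f(z) = Σ c_{α,k} z^{-α-1} (log z)^k` lie in a finite union of cosets of ℤ in ℚ, are
bounded below, the log-degree is bounded by `K`, and `f` vanishes on a nonempty open set,
then all coefficients vanish. -/
theorem log_series_coefficient_uniqueness
    (K : ℕ) (c : ℚ → ℕ → ℂ)
    (hcoset : ∃ S : Finset ℚ, ∀ α : ℚ, (∃ k, c α k ≠ 0) → ∃ s ∈ S, (α - s).den = 1)
    (hbound : ∃ B : ℚ, ∀ (α : ℚ) (k : ℕ), c α k ≠ 0 → B ≤ α)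
    (hdeg : ∀ (α : ℚ) (k : ℕ), K < k → c α k = 0)
    (O : Set ℂ) (hO : IsOpen O) (hne : O.Nonempty) (h0 : (0 : ℂ) ∉ O)
    (hsum : ∀ z ∈ O, HasSum
      (fun p : ℚ × ℕ => c p.1 p.2 * z ^ (-(p.1 : ℂ) - 1) * Complex.log z ^ p.2) 0) :
    ∀ (α : ℚ) (k : ℕ), c α k = 0 := by
  classical
  obtain ⟨S, hS⟩ := hcoset
  obtain ⟨B, hB⟩ := hbound
  by_contra hcon
  push_neg at hcon
  obtain ⟨α₁, k₁, hck⟩ := hcon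
  -- integrality structure
  set M : ℕ := ∏ s ∈ S, s.den with hMdef
  have hMpos : 0 < (M : ℚ) := by
    have : 0 < M := Finset.prod_pos (fun s _ => s.pos)
    exact_mod_cast this
  have hint : ∀ α : ℚ, (∃ k, c α k ≠ 0) → ∃ n : ℤ, (α : ℚ) * M = n := by
    intro α hα
    obtain ⟨s, hsS, hden⟩ := hS α hα
    have h1 : (((α - s).num : ℚ)) = α - s := (Rat.den_eq_one_iff _).mp hden
    obtain ⟨t, ht⟩ : s.den ∣ M := Finset.dvd_prod_of_mem _ hsS
    have hsden : s * (s.den : ℚ) = (s.num : ℚ) := rat_mul_den s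
    refine ⟨(α - s).num * (M : ℤ) + s.num * t, ?_⟩
    have hMt : (M : ℚ) = (s.den : ℚ) * (t : ℚ) := by exact_mod_cast ht
    push_cast
    rw [hMt]
    linear_combination (-((s.den : ℚ) * t)) * h1 + (t : ℚ) * hsden
  -- the support set
  set D : Set ℚ := {α | ∃ k, c α k ≠ 0} with hDdef
  have hα₁D : α₁ ∈ D := ⟨k₁, hck⟩
  have hDB : ∀ α ∈ D, B ≤ α := by rintro α ⟨k, hk⟩; exact hB α k hk
  have hfin : ∀ t : ℚ, {α : ℚ | α ∈ D ∧ α ≤ t}.Finite := by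
    intro t
    have hsub : {α : ℚ | α ∈ D ∧ α ≤ t} ⊆
        (fun n : ℤ => (n : ℚ) / M) '' (Set.Icc ⌈B * M⌉ ⌊t * M⌋) := by
      rintro α ⟨hαD, hαt⟩
      obtain ⟨n, hn⟩ := hint α hαD
      refine ⟨n, ⟨?_, ?_⟩, ?_⟩
      · rw [Int.ceil_le, ← hn]
        exact mul_le_mul_of_nonneg_right (hDB α hαD) hMpos.le
      · rw [Int.le_floor, ← hn]
        exact mul_le_mul_of_nonneg_right hαt hMpos.le
      · show (n : ℚ) / (M : ℚ) = α
        rw [← hn]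
        field_simp
    exact ((Set.finite_Icc _ _).image _).subset hsub
  -- minimal exponent
  obtain ⟨α₀, ⟨hα₀D, hα₀le⟩, hα₀min'⟩ :=
    Set.exists_min_image _ id (hfin α₁) ⟨α₁, hα₁D, le_refl _⟩
  have hα₀min : ∀ α ∈ D, α₀ ≤ α := by
    intro α hα
    by_cases hle : α ≤ α₁
    · exact hα₀min' α ⟨hα, hle⟩
    · exact le_trans hα₀le (le_of_not_ge hle)
  -- gap
  have hgap : ∀ α ∈ D, α ≠ α₀ → α₀ + 1 / M ≤ α := by
    intro α hα hne'
    obtain ⟨n, hn⟩ := hint α hα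
    obtain ⟨n₀, hn₀⟩ := hint α₀ hα₀D
    have hlt : α₀ < α := lt_of_le_of_ne (hα₀min α hα) (Ne.symm hne')
    have hnlt : n₀ < n := by
      have : (n₀ : ℚ) < n := by
        rw [← hn, ← hn₀]
        exact mul_lt_mul_of_pos_right hlt hMpos
      exact_mod_cast this
    have h1 : (n₀ : ℚ) + 1 ≤ n := by exact_mod_cast hnlt
    have hMne : (M : ℚ) ≠ 0 := hMpos.ne'
    rw [← hn, ← hn₀] at h1
    have h2 : (α₀ + 1 / M) * M ≤ α * M := by
      rw [add_mul, one_div_mul_cancel hMne]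
      linarith
    exact le_of_mul_le_mul_right h2 hMpos
  -- maximal log degree at α₀
  obtain ⟨kw, hkw⟩ := hα₀D
  have hkwK : kw ≤ K := by
    by_contra h
    exact hkw (hdeg _ _ (lt_of_not_ge h))
  set k₀ : ℕ := Nat.findGreatest (fun k => c α₀ k ≠ 0) K with hk₀def
  have hk₀ : c α₀ k₀ ≠ 0 := Nat.findGreatest_spec (P := fun k => c α₀ k ≠ 0) hkwK hkw
  have hk₀K : k₀ ≤ K := Nat.findGreatest_le K
  have hmax : ∀ k, k₀ < k → c α₀ k = 0 := by
    intro k hk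
    by_cases hkK : k ≤ K
    · by_contra h
      exact Nat.findGreatest_is_greatest (P := fun k => c α₀ k ≠ 0) hk hkK h
    · exact hdeg _ _ (lt_of_not_ge hkK)
  -- real exponents
  set Λ : ℝ := max 0 (-(B : ℝ) - 1) with hΛdef
  set e : ℚ → ℝ := fun α => -(α : ℝ) - 1 - Λ with hedef
  have he_nonpos : ∀ α ∈ D, e α ≤ 0 := by
    intro α hα
    have h1 : (B : ℝ) ≤ (α : ℝ) := by exact_mod_cast hDB α hα
    have h2 : -(B : ℝ) - 1 ≤ Λ := le_max_right _ _
    simp only [hedef]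
    linarith
  set T : ℚ × ℕ → ℂ → ℂ :=
    fun p v => c p.1 p.2 * Complex.exp ((e p.1 : ℂ) * v) * v ^ p.2 with hTdef
  have hnorm : ∀ (p : ℚ × ℕ) (v : ℂ),
      ‖T p v‖ = ‖c p.1 p.2‖ * Real.exp (e p.1 * v.re) * ‖v‖ ^ p.2 := by
    intro p v
    simp only [hTdef, norm_mul, norm_pow]
    rw [Complex.norm_exp, Complex.re_ofReal_mul]
  have hTzero : ∀ (p : ℚ × ℕ) (v : ℂ), c p.1 p.2 = 0 → T p v = 0 := by
    intro p v h; simp [hTdef, h]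
  -- transformed sums
  have hsum' : ∀ z ∈ O, HasSum (fun p : ℚ × ℕ => T p (Complex.log z)) 0 := by
    intro z hz
    have hz0 : z ≠ 0 := fun h => h0 (h ▸ hz)
    have h2 := (hsum z hz).mul_right (Complex.exp (-(Λ : ℂ) * Complex.log z))
    rw [zero_mul] at h2
    have hfun : (fun p : ℚ × ℕ =>
        c p.1 p.2 * z ^ (-(p.1 : ℂ) - 1) * Complex.log z ^ p.2 *
          Complex.exp (-(Λ : ℂ) * Complex.log z))
        = fun p : ℚ × ℕ => T p (Complex.log z) := by
      funext p
      simp only [hTdef]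
      rw [Complex.cpow_def_of_ne_zero hz0]
      have hexp : ((e p.1 : ℝ) : ℂ) * Complex.log z
          = Complex.log z * (-(p.1 : ℂ) - 1) + (-(Λ : ℂ)) * Complex.log z := by
        simp only [hedef]
        push_cast
        ring
      rw [hexp, Complex.exp_add]
      ring
    rwa [hfun] at h2
  -- geometry of O : choose base point z₀ and a good point u₀
  obtain ⟨z₁, hz₁O⟩ := hne
  have hz₁ : z₁ ≠ 0 := fun h => h0 (h ▸ hz₁O)
  have hz₁n : 0 < ‖z₁‖ := norm_pos_iff.mpr hz₁
  obtain ⟨r, hr, hball⟩ := Metric.isOpen_iff.mp hO z₁ hz₁O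
  set ρ : ℝ := min r ‖z₁‖ with hρdef
  have hρpos : 0 < ρ := lt_min hr hz₁n
  have hρr : ρ ≤ r := min_le_left _ _
  have hρz : ρ ≤ ‖z₁‖ := min_le_right _ _
  obtain ⟨s, hs0, hsρ, hs1⟩ : ∃ s : ℝ, 0 < s ∧ s < ρ ∧ ‖z₁‖ - s ≠ 1 := by
    by_cases h : ‖z₁‖ - ρ / 2 = 1
    · exact ⟨ρ / 4, by positivity, by linarith, by intro h4; rw [← h] at h4; linarith⟩
    · exact ⟨ρ / 2, by positivity, by linarith, h⟩
  set z₀ : ℂ := ((1 - s / ‖z₁‖ : ℝ) : ℂ) * z₁ with hz₀def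
  have hfac : 0 < 1 - s / ‖z₁‖ := by
    rw [sub_pos, div_lt_one hz₁n]; linarith
  have hz₀n : ‖z₀‖ = ‖z₁‖ - s := by
    rw [hz₀def, norm_mul, Complex.norm_real, Real.norm_eq_abs, abs_of_pos hfac,
      sub_mul, one_mul, div_mul_cancel₀ _ hz₁n.ne']
  have hz₀pos : 0 < ‖z₀‖ := by rw [hz₀n]; linarith
  have hz₀ne : z₀ ≠ 0 := norm_pos_iff.mp hz₀pos
  have hz₀O : z₀ ∈ O := by
    apply hball
    rw [Metric.mem_ball, dist_eq_norm]
    have : z₀ - z₁ = ((-(s / ‖z₁‖) : ℝ) : ℂ) * z₁ := by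
      rw [hz₀def]; push_cast; ring
    rw [this, norm_mul, Complex.norm_real, Real.norm_eq_abs, abs_neg,
      abs_of_pos (by positivity : (0:ℝ) < s / ‖z₁‖)]
    rw [div_mul_cancel₀ _ hz₁n.ne']
    linarith
  have hz₀1 : z₀ ≠ 1 := by
    intro h
    apply hs1
    rw [← hz₀n, h, norm_one]
  set σ₀ : ℝ := Real.log ‖z₀‖ with hσ₀def
  set v₀ : ℂ := Complex.log z₀ with hv₀def
  have hv₀re : v₀.re = σ₀ := Complex.log_re z₀
  have hv₀ne : v₀ ≠ 0 := by
    intro h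
    apply hz₀1
    have := congrArg Complex.exp h
    rwa [hv₀def, Complex.exp_log hz₀ne, Complex.exp_zero] at this
  have hv₀pos : 0 < ‖v₀‖ := norm_pos_iff.mpr hv₀ne
  -- good point u₀
  obtain ⟨u₀, hu₀O, hu₀slit, hu₀n⟩ :
      ∃ u₀ : ℂ, u₀ ∈ O ∧ ¬(u₀.im = 0 ∧ u₀.re ≤ 0) ∧ ‖z₀‖ < ‖u₀‖ := by
    by_cases h : z₁.im = 0 ∧ z₁.re ≤ 0
    · refine ⟨z₁ + (ρ / 2 : ℝ) * Complex.I, ?_, ?_, ?_⟩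
      · apply hball
        rw [Metric.mem_ball, dist_eq_norm, add_sub_cancel_left, norm_mul, Complex.norm_real,
          Real.norm_eq_abs, Complex.norm_I, mul_one, abs_of_pos (by positivity)]
        linarith
      · intro hc
        have him : (z₁ + (ρ / 2 : ℝ) * Complex.I).im = z₁.im + ρ / 2 := by simp
        rw [him, h.1, zero_add] at hc
        linarith [hc.1, hρpos]
      · rw [hz₀n]
        have hre : (z₁ + (ρ / 2 : ℝ) * Complex.I).re = z₁.re := by simp
        have h2 : |(z₁ + (ρ / 2 : ℝ) * Complex.I).re| ≤ ‖z₁ + (ρ / 2 : ℝ) * Complex.I‖ :=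
          Complex.abs_re_le_norm _
        rw [hre] at h2
        have h3 : ‖z₁‖ = |z₁.re| := by
          have hz : z₁ = ((z₁.re : ℝ) : ℂ) := Complex.ext rfl (by simp [h.1])
          rw [hz, Complex.norm_real, Real.norm_eq_abs]
          simp
        linarith
    · exact ⟨z₁, hz₁O, h, by rw [hz₀n]; linarith⟩
  have hu₀ne : u₀ ≠ 0 := fun h => h0 (h ▸ hu₀O)
  -- summable base family
  set A : ℚ × ℕ → ℝ := fun p => ‖T p v₀‖ with hAdef
  have hA : Summable A := summable_norm_iff.mpr (hsum' z₀ hz₀O).summable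
  set m : ℝ := min 1 ‖v₀‖ with hmdef
  have hm : 0 < m := lt_min one_pos hv₀pos
  have hm1 : m ≤ 1 := min_le_left _ _
  have hmv : m ≤ ‖v₀‖ := min_le_right _ _
  have hsupp : ∀ p : ℚ × ℕ, c p.1 p.2 ≠ 0 → p.1 ∈ D ∧ p.2 ≤ K := by
    intro p hp
    refine ⟨⟨p.2, hp⟩, ?_⟩
    by_contra hk
    exact hp (hdeg _ _ (lt_of_not_ge hk))
  have hAzero : ∀ p : ℚ × ℕ, c p.1 p.2 = 0 → A p = 0 := by
    intro p hp
    simp only [hAdef]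
    rw [hTzero p v₀ hp, norm_zero]
  have hApnorm : ∀ p : ℚ × ℕ, A p = ‖c p.1 p.2‖ * Real.exp (e p.1 * σ₀) * ‖v₀‖ ^ p.2 := by
    intro p
    simp only [hAdef]
    rw [hnorm p v₀, hv₀re]
  -- uniform bound on half planes
  have hTbound : ∀ (R : ℝ) (p : ℚ × ℕ) (v : ℂ), σ₀ ≤ v.re → ‖v‖ ≤ R →
      ‖T p v‖ ≤ A p * max 1 (R / m) ^ K := by
    intro R p v hσ hvR
    by_cases hp : c p.1 p.2 = 0
    · rw [hTzero p v hp, norm_zero, hAzero p hp, zero_mul]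
    · obtain ⟨hpD, hpK⟩ := hsupp p hp
      have he := he_nonpos p.1 hpD
      have hR0 : 0 ≤ R := le_trans (norm_nonneg v) hvR
      have hCm1 : (1:ℝ) ≤ max 1 (R / m) := le_max_left _ _
      have hRv : R ≤ ‖v₀‖ * max 1 (R / m) := by
        calc R = m * (R / m) := by field_simp
          _ ≤ ‖v₀‖ * max 1 (R / m) :=
            mul_le_mul hmv (le_max_right _ _) (by positivity) (norm_nonneg _)
      rw [hnorm p v, hApnorm p]
      calc ‖c p.1 p.2‖ * Real.exp (e p.1 * v.re) * ‖v‖ ^ p.2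
          ≤ ‖c p.1 p.2‖ * Real.exp (e p.1 * σ₀) * R ^ p.2 := by
            apply mul_le_mul _ (pow_le_pow_left₀ (norm_nonneg v) hvR _)
              (pow_nonneg (norm_nonneg v) _) (by positivity)
            exact mul_le_mul_of_nonneg_left
              (Real.exp_le_exp.mpr (mul_le_mul_of_nonpos_left hσ he)) (norm_nonneg _)
        _ ≤ ‖c p.1 p.2‖ * Real.exp (e p.1 * σ₀) * (‖v₀‖ ^ p.2 * max 1 (R / m) ^ K) := by
            apply mul_le_mul_of_nonneg_left _ (by positivity)
            calc R ^ p.2 ≤ (‖v₀‖ * max 1 (R / m)) ^ p.2 := pow_le_pow_left₀ hR0 hRv _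
              _ = ‖v₀‖ ^ p.2 * max 1 (R / m) ^ p.2 := mul_pow _ _ _
              _ ≤ ‖v₀‖ ^ p.2 * max 1 (R / m) ^ K :=
                  mul_le_mul_of_nonneg_left (pow_le_pow_right₀ hCm1 hpK)
                    (pow_nonneg (norm_nonneg _) _)
        _ = ‖c p.1 p.2‖ * Real.exp (e p.1 * σ₀) * ‖v₀‖ ^ p.2 * max 1 (R / m) ^ K := by
            ring
  -- the sum function is differentiable on the half plane
  set F : ℂ → ℂ := fun v => ∑' p, T p v with hFdef
  set H : Set ℂ := {v : ℂ | σ₀ < v.re} with hHdef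
  have hHopen : IsOpen H := isOpen_lt continuous_const Complex.continuous_re
  have hFdiff : DifferentiableOn ℂ F H := by
    intro v hv
    have hd : DifferentiableOn ℂ F (Metric.ball (0 : ℂ) (‖v‖ + 1) ∩ H) := by
      refine differentiableOn_tsum_of_summable_norm
        (hA.mul_right (max 1 ((‖v‖ + 1) / m) ^ K)) ?_
        (Metric.isOpen_ball.inter hHopen) ?_
      · intro p
        apply Differentiable.differentiableOn
        exact ((differentiable_const _).mul
          (Complex.differentiable_exp.comp ((differentiable_const _).mul differentiable_id))).mul
          (differentiable_pow _)
      · intro p w hw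
        refine hTbound _ p w (le_of_lt hw.2) ?_
        have := Metric.mem_ball.mp hw.1
        rw [dist_zero_right] at this
        linarith
    have hvV : v ∈ Metric.ball (0 : ℂ) (‖v‖ + 1) ∩ H :=
      ⟨Metric.mem_ball.mpr (by rw [dist_zero_right]; linarith), hv⟩
    exact (hd.differentiableAt ((Metric.isOpen_ball.inter hHopen).mem_nhds hvV)).differentiableWithinAt
  -- identity theorem : F vanishes on the half plane
  have hu₀arg : -Real.pi < (Complex.log u₀).im ∧ (Complex.log u₀).im < Real.pi := by
    rw [Complex.log_im]
    refine ⟨Complex.neg_pi_lt_arg u₀, ?_⟩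
    rcases lt_or_eq_of_le (Complex.arg_le_pi u₀) with h | h
    · exact h
    · exfalso
      obtain ⟨h1, h2⟩ := Complex.arg_eq_pi_iff.mp h
      exact hu₀slit ⟨h2, h1.le⟩
  have hlogu₀H : Complex.log u₀ ∈ H := by
    show σ₀ < (Complex.log u₀).re
    rw [Complex.log_re, hσ₀def]
    exact Real.log_lt_log hz₀pos hu₀n
  have hF0 : Set.EqOn F 0 H := by
    apply AnalyticOnNhd.eqOn_zero_of_preconnected_of_eventuallyEq_zero
      (hFdiff.analyticOnNhd hHopen) ((convex_halfSpace_re_gt σ₀).isPreconnected) hlogu₀H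
    have hΩopen : IsOpen (Complex.exp ⁻¹' O ∩
        ({v : ℂ | -Real.pi < v.im} ∩ {v : ℂ | v.im < Real.pi})) :=
      (hO.preimage Complex.continuous_exp).inter
        ((isOpen_lt continuous_const Complex.continuous_im).inter
          (isOpen_lt Complex.continuous_im continuous_const))
    have hmem : Complex.log u₀ ∈ Complex.exp ⁻¹' O ∩
        ({v : ℂ | -Real.pi < v.im} ∩ {v : ℂ | v.im < Real.pi}) := by
      refine ⟨?_, hu₀arg.1, hu₀arg.2⟩
      show Complex.exp (Complex.log u₀) ∈ O
      rwa [Complex.exp_log hu₀ne]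
    filter_upwards [hΩopen.mem_nhds hmem] with v hv
    have h1 := hsum' (Complex.exp v) hv.1
    rw [Complex.log_exp hv.2.1 hv.2.2.le] at h1
    simpa [hFdef] using h1.tsum_eq
  -- final extraction of the leading coefficient
  set e₀ : ℝ := e α₀ with he₀def
  set δ : ℝ := ((M : ℝ))⁻¹ with hδdef
  have hδ : 0 < δ := by
    rw [hδdef]
    have : (0:ℝ) < (M:ℝ) := by exact_mod_cast hMpos
    positivity
  have hgapR : ∀ α ∈ D, α ≠ α₀ → e α ≤ e₀ - δ := by
    intro α hα hne'
    have h1 := hgap α hα hne'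
    have h2 : (α₀ : ℝ) + δ ≤ (α : ℝ) := by
      have := (Rat.cast_le (K := ℝ)).mpr h1
      push_cast at this
      rw [hδdef]
      rw [one_div] at this
      linarith
    simp only [hedef, he₀def]
    linarith
  set x₁ : ℝ := max σ₀ 0 + 1 with hx₁def
  have hx₁σ : σ₀ < x₁ := lt_of_le_of_lt (le_max_left _ _) (by rw [hx₁def]; linarith)
  have hx₁1 : 1 ≤ x₁ := by rw [hx₁def]; have := le_max_right σ₀ 0; linarith
  set p₀ : ℚ × ℕ := (α₀, k₀) with hp₀def
  set f₁ : ℚ × ℕ → ℝ := fun p => if p.1 = α₀ then ‖c p.1 p.2‖ else 0 with hf₁def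
  have hf₁nn : ∀ p, 0 ≤ f₁ p := by
    intro p
    simp only [hf₁def]
    split
    · exact norm_nonneg _
    · exact le_refl _
  have hf₁ : Summable f₁ := by
    apply summable_of_ne_finset_zero (s := {α₀} ×ˢ Finset.range (K+1))
    intro p hp
    simp only [Finset.mem_product, Finset.mem_singleton, Finset.mem_range, not_and_or,
      not_lt] at hp
    simp only [hf₁def]
    rcases hp with h | h
    · rw [if_neg h]
    · by_cases h2 : p.1 = α₀
      · rw [if_pos h2, hdeg _ _ (by omega), norm_zero]
      · rw [if_neg h2]
  have hAnn : ∀ p, 0 ≤ A p := fun p => by simp only [hAdef]; exact norm_nonneg _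
  set ψ : ℝ → ℝ := fun y =>
    m⁻¹ ^ K * (Real.exp (e₀ * σ₀))⁻¹ * ((Real.exp (δ * (y - σ₀)))⁻¹ * y ^ K) with hψdef
  have hψnn : ∀ y : ℝ, 0 ≤ y → 0 ≤ ψ y := by
    intro y hy
    simp only [hψdef]
    have : (0:ℝ) ≤ y ^ K := pow_nonneg hy K
    positivity
  set C₁ : ℝ := ∑' p, f₁ p with hC₁def
  set C₂ : ℝ := ∑' p, A p with hC₂def
  -- the main estimate
  have key : ∀ x : ℝ, x₁ ≤ x → ‖c α₀ k₀‖ ≤ C₁ * x⁻¹ + C₂ * ψ x := by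
    intro x hx
    have hx1 : 1 ≤ x := le_trans hx₁1 hx
    have hx0 : 0 < x := lt_of_lt_of_le one_pos hx1
    have hxσ : σ₀ < x := lt_of_lt_of_le hx₁σ hx
    have hxcre : ((x:ℂ)).re = x := Complex.ofReal_re x
    have hxcn : ‖((x:ℂ))‖ = x := by
      rw [Complex.norm_real, Real.norm_eq_abs, abs_of_pos hx0]
    have hSx : Summable (fun p => T p (x:ℂ)) := by
      apply Summable.of_norm
      apply Summable.of_nonneg_of_le (fun p => norm_nonneg _)
        (fun p => hTbound x p (x:ℂ) (by rw [hxcre]; exact hxσ.le) (le_of_eq hxcn))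
      exact hA.mul_right _
    have hFx0 : ∑' p, T p (x:ℂ) = 0 := by
      have hmem : (x:ℂ) ∈ H := by show σ₀ < ((x:ℂ)).re; rw [hxcre]; exact hxσ
      have := hF0 hmem
      simpa [hFdef] using this
    have h0eq := Summable.tsum_eq_add_tsum_ite hSx p₀
    rw [hFx0] at h0eq
    have htp : T p₀ (x:ℂ) = -∑' p, if p = p₀ then 0 else T p (x:ℂ) :=
      eq_neg_of_add_eq_zero_left h0eq.symm
    have hSIn : Summable (fun p => ‖if p = p₀ then 0 else T p (x:ℂ)‖) := by
      apply Summable.of_nonneg_of_le (fun p => norm_nonneg _)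
        (fun p => ?_) (summable_norm_iff.mpr hSx)
      by_cases h : p = p₀ <;> simp [h]
    have hEpos : 0 < Real.exp (e₀ * x) * x ^ k₀ := mul_pos (Real.exp_pos _) (pow_pos hx0 _)
    have hψx : 0 ≤ ψ x := hψnn x hx0.le
    -- pointwise estimate on all non-leading terms
    have hptw : ∀ p : ℚ × ℕ, ‖if p = p₀ then 0 else T p (x:ℂ)‖ ≤
        (f₁ p * x⁻¹ + A p * ψ x) * (Real.exp (e₀ * x) * x ^ k₀) := by
      intro p
      have hψx' : 0 ≤ ψ x := hψx
      have hRHSnn : 0 ≤ (f₁ p * x⁻¹ + A p * ψ x) * (Real.exp (e₀ * x) * x ^ k₀) :=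
        mul_nonneg (add_nonneg (mul_nonneg (hf₁nn p) (inv_nonneg.mpr hx0.le))
          (mul_nonneg (hAnn p) hψx)) hEpos.le
      by_cases hpp : p = p₀
      · rw [if_pos hpp, norm_zero]; exact hRHSnn
      by_cases hc : c p.1 p.2 = 0
      · rw [if_neg hpp, hTzero p _ hc, norm_zero]; exact hRHSnn
      obtain ⟨hpD, hpK⟩ := hsupp p hc
      rw [if_neg hpp, hnorm p (x:ℂ), hxcre, hxcn]
      by_cases hα : p.1 = α₀
      · -- same exponent, lower log power
        have hk2 : p.2 ≠ k₀ := by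
          intro h
          exact hpp (Prod.ext hα h)
        have hklt : p.2 < k₀ := by
          rcases lt_or_gt_of_ne hk2 with h | h
          · exact h
          · exfalso
            apply hc
            rw [hα]
            exact hmax p.2 h
        have hf₁p : f₁ p = ‖c p.1 p.2‖ := by simp only [hf₁def]; rw [if_pos hα]
        have h6 : x * x ^ p.2 ≤ x ^ k₀ := by
          rw [← pow_succ']
          exact pow_le_pow_right₀ hx1 hklt
        have hxpow : x ^ p.2 ≤ x⁻¹ * x ^ k₀ := by
          rw [← mul_le_mul_iff_right₀ hx0, ← mul_assoc, mul_inv_cancel₀ hx0.ne', one_mul]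
          exact h6
        calc ‖c p.1 p.2‖ * Real.exp (e p.1 * x) * x ^ p.2
            ≤ ‖c p.1 p.2‖ * Real.exp (e₀ * x) * (x⁻¹ * x ^ k₀) := by
              rw [hα, ← he₀def]
              exact mul_le_mul_of_nonneg_left hxpow (by positivity)
          _ = (f₁ p * x⁻¹) * (Real.exp (e₀ * x) * x ^ k₀) := by rw [hf₁p]; ring
          _ ≤ (f₁ p * x⁻¹ + A p * ψ x) * (Real.exp (e₀ * x) * x ^ k₀) := by
              apply mul_le_mul_of_nonneg_right _ hEpos.le
              have : 0 ≤ A p * ψ x := mul_nonneg (hAnn p) hψx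
              linarith
      · -- strictly larger exponent
        have hgapp : e p.1 ≤ e₀ - δ := hgapR p.1 hpD hα
        have h5 : ‖c p.1 p.2‖ * (Real.exp (e p.1 * σ₀) * m ^ K) ≤ A p := by
          rw [hApnorm p]
          have hmK : m ^ K ≤ ‖v₀‖ ^ p.2 := by
            calc m ^ K ≤ m ^ p.2 := pow_le_pow_of_le_one hm.le hm1 hpK
              _ ≤ ‖v₀‖ ^ p.2 := pow_le_pow_left₀ hm.le hmv _
          calc ‖c p.1 p.2‖ * (Real.exp (e p.1 * σ₀) * m ^ K)
              ≤ ‖c p.1 p.2‖ * (Real.exp (e p.1 * σ₀) * ‖v₀‖ ^ p.2) := by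
                apply mul_le_mul_of_nonneg_left _ (norm_nonneg _)
                exact mul_le_mul_of_nonneg_left hmK (Real.exp_pos _).le
            _ = ‖c p.1 p.2‖ * Real.exp (e p.1 * σ₀) * ‖v₀‖ ^ p.2 := by ring
        have hE1 : Real.exp (e p.1 * x) ≤
            Real.exp (e p.1 * σ₀ - e₀ * σ₀ - δ * (x - σ₀) + e₀ * x) := by
          apply Real.exp_le_exp.mpr
          have hml := mul_le_mul_of_nonneg_right hgapp (sub_nonneg.mpr hxσ.le)
          calc e p.1 * x = e p.1 * σ₀ + e p.1 * (x - σ₀) := by ring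
            _ ≤ e p.1 * σ₀ + (e₀ - δ) * (x - σ₀) := by linarith
            _ = e p.1 * σ₀ - e₀ * σ₀ - δ * (x - σ₀) + e₀ * x := by ring
        have hx2 : x ^ p.2 ≤ x ^ K := pow_le_pow_right₀ hx1 hpK
        have hxk₀1 : (1:ℝ) ≤ x ^ k₀ := by
          calc (1:ℝ) = 1 ^ k₀ := (one_pow _).symm
            _ ≤ x ^ k₀ := pow_le_pow_left₀ zero_le_one hx1 _
        have hsplit : Real.exp (e p.1 * σ₀ - e₀ * σ₀ - δ * (x - σ₀) + e₀ * x) =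
            Real.exp (e p.1 * σ₀) * (Real.exp (e₀ * σ₀))⁻¹ * (Real.exp (δ * (x - σ₀)))⁻¹ *
              Real.exp (e₀ * x) := by
          rw [Real.exp_add, Real.exp_sub, Real.exp_sub, div_eq_mul_inv, div_eq_mul_inv]
        have hψxeq : ψ x = (m ^ K)⁻¹ * (Real.exp (e₀ * σ₀))⁻¹ *
            ((Real.exp (δ * (x - σ₀)))⁻¹ * x ^ K) := by
          show m⁻¹ ^ K * (Real.exp (e₀ * σ₀))⁻¹ * ((Real.exp (δ * (x - σ₀)))⁻¹ * x ^ K) = _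
          rw [inv_pow]
        have hc1 : (m ^ K) * (m ^ K)⁻¹ = 1 := mul_inv_cancel₀ (by positivity)
        calc ‖c p.1 p.2‖ * Real.exp (e p.1 * x) * x ^ p.2
            ≤ ‖c p.1 p.2‖ * (Real.exp (e p.1 * σ₀) * (Real.exp (e₀ * σ₀))⁻¹ *
                (Real.exp (δ * (x - σ₀)))⁻¹ * Real.exp (e₀ * x)) * x ^ K := by
              rw [← hsplit]
              exact mul_le_mul (mul_le_mul_of_nonneg_left hE1 (norm_nonneg _)) hx2
                (pow_nonneg hx0.le _) (by positivity)
          _ ≤ (‖c p.1 p.2‖ * (Real.exp (e p.1 * σ₀) * m ^ K)) *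
                ((m ^ K)⁻¹ * (Real.exp (e₀ * σ₀))⁻¹ * ((Real.exp (δ * (x - σ₀)))⁻¹ * x ^ K)) *
                (Real.exp (e₀ * x) * x ^ k₀) := by
              have heq : (‖c p.1 p.2‖ * (Real.exp (e p.1 * σ₀) * m ^ K)) *
                  ((m ^ K)⁻¹ * (Real.exp (e₀ * σ₀))⁻¹ * ((Real.exp (δ * (x - σ₀)))⁻¹ * x ^ K)) *
                  (Real.exp (e₀ * x) * x ^ k₀)
                  = (‖c p.1 p.2‖ * (Real.exp (e p.1 * σ₀) * (Real.exp (e₀ * σ₀))⁻¹ *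
                      (Real.exp (δ * (x - σ₀)))⁻¹ * Real.exp (e₀ * x)) * x ^ K) * x ^ k₀ := by
                linear_combination (‖c p.1 p.2‖ * Real.exp (e p.1 * σ₀) *
                  (Real.exp (e₀ * σ₀))⁻¹ * (Real.exp (δ * (x - σ₀)))⁻¹ *
                  Real.exp (e₀ * x) * x ^ K * x ^ k₀) * hc1
              rw [heq]
              exact le_mul_of_one_le_right (by positivity) hxk₀1
          _ ≤ (A p * ((m ^ K)⁻¹ * (Real.exp (e₀ * σ₀))⁻¹ *
                ((Real.exp (δ * (x - σ₀)))⁻¹ * x ^ K))) * (Real.exp (e₀ * x) * x ^ k₀) := by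
              apply mul_le_mul_of_nonneg_right _ hEpos.le
              apply mul_le_mul_of_nonneg_right h5
              rw [← hψxeq]
              exact hψx
          _ = (A p * ψ x) * (Real.exp (e₀ * x) * x ^ k₀) := by rw [hψxeq]
          _ ≤ (f₁ p * x⁻¹ + A p * ψ x) * (Real.exp (e₀ * x) * x ^ k₀) := by
              apply mul_le_mul_of_nonneg_right _ hEpos.le
              have : 0 ≤ f₁ p * x⁻¹ := mul_nonneg (hf₁nn p) (inv_nonneg.mpr hx0.le)
              linarith
    -- sum the pointwise estimates
    have hSrhs : Summable (fun p => (f₁ p * x⁻¹ + A p * ψ x) *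
        (Real.exp (e₀ * x) * x ^ k₀)) :=
      ((hf₁.mul_right _).add (hA.mul_right _)).mul_right _
    have hnormle : ‖T p₀ (x:ℂ)‖ ≤ ∑' p, ‖if p = p₀ then 0 else T p (x:ℂ)‖ := by
      rw [htp, norm_neg]
      exact norm_tsum_le_tsum_norm hSIn
    have htsumle : (∑' p, ‖if p = p₀ then 0 else T p (x:ℂ)‖) ≤
        (C₁ * x⁻¹ + C₂ * ψ x) * (Real.exp (e₀ * x) * x ^ k₀) := by
      calc (∑' p, ‖if p = p₀ then 0 else T p (x:ℂ)‖)
          ≤ ∑' p, (f₁ p * x⁻¹ + A p * ψ x) * (Real.exp (e₀ * x) * x ^ k₀) :=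
            Summable.tsum_le_tsum hptw hSIn hSrhs
        _ = (C₁ * x⁻¹ + C₂ * ψ x) * (Real.exp (e₀ * x) * x ^ k₀) := by
            rw [tsum_mul_right, Summable.tsum_add (hf₁.mul_right _) (hA.mul_right _),
              tsum_mul_right, tsum_mul_right]
    have hTp₀ : ‖T p₀ (x:ℂ)‖ = ‖c α₀ k₀‖ * (Real.exp (e₀ * x) * x ^ k₀) := by
      rw [hnorm p₀ (x:ℂ), hxcre, hxcn]
      ring
    have hfinal : ‖c α₀ k₀‖ * (Real.exp (e₀ * x) * x ^ k₀) ≤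
        (C₁ * x⁻¹ + C₂ * ψ x) * (Real.exp (e₀ * x) * x ^ k₀) := by
      rw [← hTp₀]
      exact le_trans hnormle htsumle
    exact le_of_mul_le_mul_right hfinal hEpos
  -- the bound tends to zero
  have hQ : Tendsto (fun x : ℝ => C₁ * x⁻¹ + C₂ * ψ x) atTop (𝓝 0) := by
    have h1 : Tendsto (fun x : ℝ => C₁ * x⁻¹) atTop (𝓝 0) := by
      have := tendsto_inv_atTop_zero.const_mul C₁
      rwa [mul_zero] at this
    have hδx : Tendsto (fun x : ℝ => δ * x) atTop atTop :=
      Tendsto.const_mul_atTop hδ tendsto_id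
    have hcore0 : Tendsto (fun x : ℝ => (δ * x) ^ K * Real.exp (-(δ * x))) atTop (𝓝 0) := by
      have := (Real.tendsto_pow_mul_exp_neg_atTop_nhds_zero K).comp hδx
      simpa [Function.comp_def] using this
    have hcoreeq : (fun x : ℝ => (Real.exp (δ * (x - σ₀)))⁻¹ * x ^ K) =
        fun x : ℝ => (δ⁻¹ ^ K * Real.exp (δ * σ₀)) * ((δ * x) ^ K * Real.exp (-(δ * x))) := by
      funext y
      have hp1 : δ⁻¹ ^ K * (δ * y) ^ K = y ^ K := by
        rw [← mul_pow, inv_mul_cancel_left₀ hδ.ne']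
      have hp2 : Real.exp (δ * σ₀) * Real.exp (-(δ * y)) = (Real.exp (δ * (y - σ₀)))⁻¹ := by
        rw [← Real.exp_add, ← Real.exp_neg]
        congr 1
        ring
      calc (Real.exp (δ * (y - σ₀)))⁻¹ * y ^ K
          = (Real.exp (δ * σ₀) * Real.exp (-(δ * y))) * (δ⁻¹ ^ K * (δ * y) ^ K) := by
            rw [hp1, hp2]
        _ = (δ⁻¹ ^ K * Real.exp (δ * σ₀)) * ((δ * y) ^ K * Real.exp (-(δ * y))) := by ring
    have hψ0 : Tendsto ψ atTop (𝓝 0) := by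
      have h2 : Tendsto (fun x : ℝ => (Real.exp (δ * (x - σ₀)))⁻¹ * x ^ K) atTop (𝓝 0) := by
        rw [hcoreeq]
        have := hcore0.const_mul (δ⁻¹ ^ K * Real.exp (δ * σ₀))
        rwa [mul_zero] at this
      have h3 := h2.const_mul (m⁻¹ ^ K * (Real.exp (e₀ * σ₀))⁻¹)
      rw [mul_zero] at h3
      exact h3
    have h4 := hψ0.const_mul C₂
    rw [mul_zero] at h4
    have h5 := h1.add h4
    rwa [add_zero] at h5
  have hle : ‖c α₀ k₀‖ ≤ 0 :=
    ge_of_tendsto hQ (eventually_atTop.mpr ⟨x₁, key⟩)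
  exact hk₀ (norm_le_zero_iff.mp hle)
end
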